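/- Fix T > 0, K > 0, r ∈ ℝ, ν > 0, and let C_ν(t, x) = x·Φ(d₁(t, x)) − K·e^{−r(T−t)}·Φ(d₂(t, x)) be the Black–Scholes call price. Then for all 0 ≤ t < T and x > 0, C_ν satisfies the Black–Scholes partial differential equation: ∂C_ν/∂t (t, x) + r x · ∂C_ν/∂x (t, x) + (1/2) ν² x² · ∂²C_ν/∂x² (t, x) = r · C_ν(t, x). -/

import Mathlib

open Filter

/-- The cumulative distribution function `Φ` of the standard normal law. -/
noncomputable def stdNormalCdf (x : ℝ) : ℝ :=
  ∫ u in Set.Iic x, Real.exp (-u ^ 2 / 2) / Real.sqrt (2 * Real.pi)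

/-- The Black–Scholes quantity `d₁` for maturity `T`, strike `K`, rate `r`,
volatility `ν`. -/
noncomputable def bsD1 (T K r ν t x : ℝ) : ℝ :=
  (Real.log (x / K) + (r + ν ^ 2 / 2) * (T - t)) / (ν * Real.sqrt (T - t))

/-- The Black–Scholes quantity `d₂ = d₁ - ν √(T - t)`. -/
noncomputable def bsD2 (T K r ν t x : ℝ) : ℝ :=
  bsD1 T K r ν t x - ν * Real.sqrt (T - t)

/-- The Black–Scholes call price
`C_ν(t, x) = x Φ(d₁(t, x)) - K e^{-r(T-t)} Φ(d₂(t, x))`. -/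
noncomputable def bsPrice (T K r ν t x : ℝ) : ℝ :=
  x * stdNormalCdf (bsD1 T K r ν t x) -
    K * Real.exp (-r * (T - t)) * stdNormalCdf (bsD2 T K r ν t x)

/-- The standard normal density. -/
noncomputable def stdNormalPdf (x : ℝ) : ℝ :=
  Real.exp (-x ^ 2 / 2) / Real.sqrt (2 * Real.pi)

lemma gauss_integrable :
    MeasureTheory.Integrable
      (fun u : ℝ => Real.exp (-u ^ 2 / 2) / Real.sqrt (2 * Real.pi)) := by
  have h := integrable_exp_neg_mul_sq (by norm_num : (0:ℝ) < 1/2)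
  have h2 := h.div_const (Real.sqrt (2 * Real.pi))
  convert h2 using 2 with u
  ring_nf

lemma gauss_continuous :
    Continuous (fun u : ℝ => Real.exp (-u ^ 2 / 2) / Real.sqrt (2 * Real.pi)) := by
  fun_prop

lemma hasDerivAt_stdNormalCdf (x : ℝ) :
    HasDerivAt stdNormalCdf (stdNormalPdf x) x := by
  set f : ℝ → ℝ := fun u => Real.exp (-u ^ 2 / 2) / Real.sqrt (2 * Real.pi) with hf
  have heq : stdNormalCdf = fun y => (∫ u in Set.Iic (0:ℝ), f u) + ∫ u in (0:ℝ)..y, f u := by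
    funext y
    rw [← intervalIntegral.integral_Iic_sub_Iic gauss_integrable.integrableOn
      gauss_integrable.integrableOn]
    simp only [stdNormalCdf, hf]; ring
  rw [heq]
  have h := intervalIntegral.integral_hasDerivAt_right
    (gauss_continuous.intervalIntegrable 0 x)
    (gauss_continuous.stronglyMeasurableAtFilter _ _)
    gauss_continuous.continuousAt
  exact (h.const_add _)

/-- The key identity `x φ(d₁) = K e^{-r(T-t)} φ(d₂)`. -/
lemma bs_key_identity (T K r ν t y : ℝ) (htT : t < T) (hK : 0 < K) (hν : 0 < ν)
    (hy : 0 < y) :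
    y * stdNormalPdf (bsD1 T K r ν t y) =
      K * Real.exp (-r * (T - t)) * stdNormalPdf (bsD2 T K r ν t y) := by
  have hτ : 0 < T - t := sub_pos.mpr htT
  have hs : 0 < Real.sqrt (T - t) := Real.sqrt_pos.mpr hτ
  set s := Real.sqrt (T - t) with hsdef
  have hs2 : s ^ 2 = T - t := Real.sq_sqrt hτ.le
  set a := bsD1 T K r ν t y with ha
  have hms : a * (ν * s) = Real.log (y / K) + (r + ν ^ 2 / 2) * (T - t) := by
    rw [ha, bsD1]
    field_simp
    rw [← hsdef]
  have h1 : -(bsD2 T K r ν t y) ^ 2 / 2 =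
      -a ^ 2 / 2 + Real.log (y / K) + r * (T - t) := by
    rw [bsD2, ← ha]
    linear_combination hms - (ν ^ 2 / 2) * hs2
  rw [stdNormalPdf, stdNormalPdf, h1, Real.exp_add, Real.exp_add,
    Real.exp_log (div_pos hy hK), neg_mul]
  have hE : Real.exp (-(r * (T - t))) * Real.exp (r * (T - t)) = 1 := by
    rw [← Real.exp_add]; simp
  field_simp
  linear_combination (-1 : ℝ) * hE

theorem bsPrice_satisfies_bs_pde
    (T K r ν : ℝ) (hT : 0 < T) (hK : 0 < K) (hν : 0 < ν) :
    ∀ t x : ℝ, 0 ≤ t → t < T → 0 < x →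
      deriv (fun s => bsPrice T K r ν s x) t +
        r * x * deriv (fun y => bsPrice T K r ν t y) x +
        (1 / 2) * ν ^ 2 * x ^ 2 *
          deriv (fun y => deriv (fun z => bsPrice T K r ν t z) y) x =
      r * bsPrice T K r ν t x := by
  intro t x ht htT hx
  have hτ : 0 < T - t := sub_pos.mpr htT
  have hs : 0 < Real.sqrt (T - t) := Real.sqrt_pos.mpr hτ
  set s := Real.sqrt (T - t) with hsdef
  have hs2 : s ^ 2 = T - t := Real.sq_sqrt hτ.le
  -- derivative of d1, d2 in space, at any y > 0
  have hd1x : ∀ y : ℝ, 0 < y →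
      HasDerivAt (fun z => bsD1 T K r ν t z) (1 / (y * (ν * s))) y := by
    intro y hy
    have hlog : HasDerivAt (fun z : ℝ => Real.log (z / K)) (1 / y) y := by
      have h1 : HasDerivAt (fun z : ℝ => z / K) (1 / K) y := by
        simpa using (hasDerivAt_id y).div_const K
      have h2 := (Real.hasDerivAt_log (div_pos hy hK).ne').comp y h1
      refine h2.congr_deriv ?_
      field_simp
    have h3 : HasDerivAt (fun z : ℝ =>
        (Real.log (z / K) + (r + ν ^ 2 / 2) * (T - t)) / (ν * s))
        ((1 / y) / (ν * s)) y := (hlog.add_const _).div_const _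
    refine h3.congr_deriv ?_
    rw [div_div]
  have hd2x : ∀ y : ℝ, 0 < y →
      HasDerivAt (fun z => bsD2 T K r ν t z) (1 / (y * (ν * s))) y := by
    intro y hy
    exact (hd1x y hy).sub_const (ν * s)
  -- space derivative of the price
  have hpx : ∀ y : ℝ, 0 < y →
      HasDerivAt (fun z => bsPrice T K r ν t z)
        (stdNormalCdf (bsD1 T K r ν t y)) y := by
    intro y hy
    have hΦ1 : HasDerivAt (fun z => stdNormalCdf (bsD1 T K r ν t z))
        (stdNormalPdf (bsD1 T K r ν t y) * (1 / (y * (ν * s)))) y :=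
      (hasDerivAt_stdNormalCdf _).comp y (hd1x y hy)
    have hΦ2 : HasDerivAt (fun z => stdNormalCdf (bsD2 T K r ν t z))
        (stdNormalPdf (bsD2 T K r ν t y) * (1 / (y * (ν * s)))) y :=
      (hasDerivAt_stdNormalCdf _).comp y (hd2x y hy)
    have hmul : HasDerivAt (fun z => z * stdNormalCdf (bsD1 T K r ν t z))
        (1 * stdNormalCdf (bsD1 T K r ν t y) +
          y * (stdNormalPdf (bsD1 T K r ν t y) * (1 / (y * (ν * s))))) y :=
      (hasDerivAt_id y).mul hΦ1
    have hall := hmul.sub (hΦ2.const_mul (K * Real.exp (-r * (T - t))))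
    have hid := bs_key_identity T K r ν t y htT hK hν hy
    refine hall.congr_deriv ?_
    linear_combination (1 / (y * (ν * s))) * hid
  -- second space derivative
  have hpx2 : HasDerivAt (fun y => deriv (fun z => bsPrice T K r ν t z) y)
      (stdNormalPdf (bsD1 T K r ν t x) * (1 / (x * (ν * s)))) x := by
    have hev : (fun y => stdNormalCdf (bsD1 T K r ν t y)) =ᶠ[nhds x]
        (fun y => deriv (fun z => bsPrice T K r ν t z) y) := by
      filter_upwards [Ioi_mem_nhds hx] with y hy
      exact ((hpx y hy).deriv).symm
    exact (((hasDerivAt_stdNormalCdf _).comp x (hd1x x hx))).congr_of_eventuallyEq hev.symm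
  -- time derivative
  have hsqt : HasDerivAt (fun u => Real.sqrt (T - u)) (-(1 / (2 * s))) t := by
    have h1 : HasDerivAt (fun u : ℝ => T - u) (-1) t := by
      simpa using (hasDerivAt_id t).const_sub T
    have h2 := (Real.hasDerivAt_sqrt hτ.ne').comp t h1
    refine h2.congr_deriv ?_
    rw [← hsdef]; ring
  set A := Real.log (x / K) with hA
  set c := r + ν ^ 2 / 2 with hc
  set D1' : ℝ := ((-c) * (ν * s) - (A + c * (T - t)) * (ν * (-(1 / (2 * s))))) / (ν * s) ^ 2
    with hD1'
  have hd1t : HasDerivAt (fun u => bsD1 T K r ν u x) D1' t := by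
    have hnum : HasDerivAt (fun u : ℝ => A + c * (T - u)) (-c) t := by
      have := (((hasDerivAt_id t).const_sub T).const_mul c).const_add A
      refine this.congr_deriv ?_
      ring
    have hden : HasDerivAt (fun u : ℝ => ν * Real.sqrt (T - u))
        (ν * (-(1 / (2 * s)))) t := hsqt.const_mul ν
    exact hnum.div hden (by positivity)
  have hd2t : HasDerivAt (fun u => bsD2 T K r ν u x) (D1' + ν * (1 / (2 * s))) t := by
    have := hd1t.sub (hsqt.const_mul ν)
    refine this.congr_deriv ?_
    ring
  have hΦ1t : HasDerivAt (fun u => stdNormalCdf (bsD1 T K r ν u x))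
      (stdNormalPdf (bsD1 T K r ν t x) * D1') t :=
    (hasDerivAt_stdNormalCdf _).comp t hd1t
  have hΦ2t : HasDerivAt (fun u => stdNormalCdf (bsD2 T K r ν u x))
      (stdNormalPdf (bsD2 T K r ν t x) * (D1' + ν * (1 / (2 * s)))) t :=
    (hasDerivAt_stdNormalCdf _).comp t hd2t
  have hexpt : HasDerivAt (fun u : ℝ => K * Real.exp (-r * (T - u)))
      (K * (Real.exp (-r * (T - t)) * r)) t := by
    have h1 : HasDerivAt (fun u : ℝ => -r * (T - u)) r t := by
      have := ((hasDerivAt_id t).const_sub T).const_mul (-r)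
      refine this.congr_deriv ?_
      ring
    have h2 := (Real.hasDerivAt_exp (-r * (T - t))).comp t h1
    exact (h2.const_mul K)
  have hpt : HasDerivAt (fun u => bsPrice T K r ν u x)
      (x * (stdNormalPdf (bsD1 T K r ν t x) * D1') -
        (K * (Real.exp (-r * (T - t)) * r) * stdNormalCdf (bsD2 T K r ν t x) +
          K * Real.exp (-r * (T - t)) *
            (stdNormalPdf (bsD2 T K r ν t x) * (D1' + ν * (1 / (2 * s)))))) t := by
    exact (hΦ1t.const_mul x).sub (hexpt.mul hΦ2t)
  -- assemble
  have hid := bs_key_identity T K r ν t x htT hK hν hx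
  rw [hpt.deriv, (hpx x hx).deriv, hpx2.deriv, bsPrice]
  set Φ1 := stdNormalCdf (bsD1 T K r ν t x)
  set Φ2 := stdNormalCdf (bsD2 T K r ν t x)
  set φ1 := stdNormalPdf (bsD1 T K r ν t x)
  set φ2 := stdNormalPdf (bsD2 T K r ν t x)
  have hφ2 : φ2 = x * φ1 / (K * Real.exp (-r * (T - t))) := by
    rw [hid]
    field_simp
  rw [hφ2]
  have hE : Real.exp (-r * (T - t)) ≠ 0 := Real.exp_ne_zero _
  field_simp
  ring
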